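/- If the DS code C_DS^⊥ has minimum distance d, then for every i with 1 ≤ i ≤ d-1, the split weight enumerators satisfy B^⊥_{i,0} = Σ_{j=0}^{m} B_{i,j}; moreover B^⊥_{i,0} ≥ Σ_{j=1}^{m} B_{i,j} for all i = d,…,n, and B_{0,0} = B^⊥_{0,0} = 1 while B_{i,0} = 0 for all i ≥ 1. -/

import Mathlib

open Finset

noncomputable section

abbrev F2 := ZMod 2
abbrev F4 := GaloisField 2 2

/-- Trace from `F4` to `F2`. -/
def trF : F4 →ₗ[F2] F2 := Algebra.trace F2 F4

/-- Hamming weight of a vector. -/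
def wt {α : Type*} [Zero α] {N : ℕ} (x : Fin N → α) : ℕ := Nat.card {i // x i ≠ 0}

/-- Hermitian trace inner product on `F4^n`. -/
def ipD {n : ℕ} (x y : Fin n → F4) : F2 := trF (∑ i, x i * (y i) ^ 2)

/-- Mixed inner product on `F4^n × F2^m`. -/
def ipDS {n m : ℕ} (x y : (Fin n → F4) × (Fin m → F2)) : F2 :=
  ipD x.1 y.1 + ∑ j, x.2 j * y.2 j

/-- The F2-row space of `H` inside `F4^n`. -/
def rowSpanF2 {n m : ℕ} (H : Fin m → Fin n → F4) : Set (Fin n → F4) :=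
  {v | ∃ u : Fin m → F2, v = fun i => ∑ r, algebraMap F2 F4 (u r) * H r i}

/-- The data-syndrome code generated by the rows of `[H | I_m]`. -/
def CDS {n m : ℕ} (H : Fin m → Fin n → F4) : Set ((Fin n → F4) × (Fin m → F2)) :=
  {w | ∃ u : Fin m → F2, w = (fun i => ∑ r, algebraMap F2 F4 (u r) * H r i, u)}

/-- Dual with respect to the mixed inner product. -/
def dualDS {n m : ℕ} (D : Set ((Fin n → F4) × (Fin m → F2))) :
    Set ((Fin n → F4) × (Fin m → F2)) :=
  {v | ∀ w ∈ D, ipDS w v = 0}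

/-- Split weight enumerator. -/
def Bwt {n m : ℕ} (D : Set ((Fin n → F4) × (Fin m → F2))) (i j : ℕ) : ℕ :=
  Nat.card {w : (Fin n → F4) × (Fin m → F2) // w ∈ D ∧ wt w.1 = i ∧ wt w.2 = j}

/-- q-ary Krawtchouk polynomial `K_t(x; N, q)` evaluated at integer `x`. -/
def kraw (t x N q : ℕ) : ℚ :=
  ∑ s ∈ Finset.range (t + 1),
    (-1 : ℚ) ^ s * ((q : ℚ) - 1) ^ (t - s) * (x.choose s) * ((N - x).choose (t - s))

namespace Stmt5Aux

lemma wt_eq_zero_iff {α : Type*} [Zero α] {N : ℕ} (x : Fin N → α) : wt x = 0 ↔ x = 0 := by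
  rw [wt]
  constructor
  · intro h
    funext i
    by_contra hi
    have : Nonempty {j // x j ≠ 0} := ⟨⟨i, hi⟩⟩
    have := Nat.card_pos (α := {j // x j ≠ 0})
    omega
  · intro h; subst h
    simp [Nat.card_eq_zero]

lemma wt_zero {α : Type*} [Zero α] {N : ℕ} : wt (0 : Fin N → α) = 0 :=
  (wt_eq_zero_iff _).mpr rfl

lemma wt_le {α : Type*} [Zero α] {N : ℕ} (x : Fin N → α) : wt x ≤ N :=
  calc Nat.card {i // x i ≠ 0} ≤ Nat.card (Fin N) :=
        Nat.card_le_card_of_injective _ Subtype.val_injective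
    _ = N := Nat.card_eq_fintype_card.trans (Fintype.card_fin N)

/-- The map `u ↦ uH`. -/
def phi {n m : ℕ} (H : Fin m → Fin n → F4) (u : Fin m → F2) : Fin n → F4 :=
  fun i => ∑ r, algebraMap F2 F4 (u r) * H r i

lemma phi_eq_sum_smul {n m : ℕ} (H : Fin m → Fin n → F4) (u : Fin m → F2) :
    phi H u = ∑ r, u r • H r := by
  funext i
  rw [Finset.sum_apply]
  exact Finset.sum_congr rfl fun r _ => by
    rw [Pi.smul_apply, Algebra.smul_def]

lemma phi_injective {n m : ℕ} {H : Fin m → Fin n → F4}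
    (hind : LinearIndependent F2 H) : Function.Injective (phi H) := by
  intro u v h
  have h0 : ∑ r, (u - v) r • H r = 0 := by
    simp only [Pi.sub_apply, sub_smul, Finset.sum_sub_distrib, ← phi_eq_sum_smul, h, sub_self]
  have := Fintype.linearIndependent_iff.mp hind _ h0
  funext r
  have hr := this r
  simpa [sub_eq_zero] using hr

lemma algebraMap_sq (c : F2) : (algebraMap F2 F4 c) ^ 2 = algebraMap F2 F4 c := by
  rcases (by revert c; decide : c = 0 ∨ c = 1) with h | h <;> simp [h]

lemma trF_algebraMap_mul (c : F2) (x : F4) : trF (algebraMap F2 F4 c * x) = c * trF x := by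
  rw [← Algebra.smul_def, map_smul, smul_eq_mul]

lemma sq_sum {ι : Type*} (s : Finset ι) (f : ι → F4) :
    (∑ i ∈ s, f i) ^ 2 = ∑ i ∈ s, (f i) ^ 2 := by
  classical
  induction s using Finset.induction with
  | empty => simp
  | insert _ _ h ih => rw [Finset.sum_insert h, Finset.sum_insert h, add_pow_char _ _ 2, ih]

lemma ipD_phi_phi {n m : ℕ} {H : Fin m → Fin n → F4}
    (horth : ∀ r s, ipD (H r) (H s) = 0) (u v : Fin m → F2) :
    ipD (phi H u) (phi H v) = 0 := by
  have key : ∑ i, phi H u i * (phi H v i) ^ 2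
      = ∑ r, ∑ s, algebraMap F2 F4 (u r * v s) * ∑ i, H r i * (H s i) ^ 2 := by
    unfold phi
    simp_rw [sq_sum, mul_pow, algebraMap_sq, Finset.sum_mul, Finset.mul_sum]
    rw [Finset.sum_comm]
    refine Finset.sum_congr rfl fun r _ => ?_
    rw [Finset.sum_comm]
    refine Finset.sum_congr rfl fun s _ => Finset.sum_congr rfl fun i _ => ?_
    rw [map_mul]
    ring
  unfold ipD
  rw [key, map_sum]
  refine Finset.sum_eq_zero fun r _ => ?_
  rw [map_sum]
  refine Finset.sum_eq_zero fun s _ => ?_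
  rw [trF_algebraMap_mul]
  have := horth r s
  unfold ipD at this
  rw [this, mul_zero]

lemma phi_mem_dual {n m : ℕ} {H : Fin m → Fin n → F4}
    (horth : ∀ r s, ipD (H r) (H s) = 0) (v : Fin m → F2) :
    (phi H v, (0 : Fin m → F2)) ∈ dualDS (CDS H) := by
  rintro w ⟨u, rfl⟩
  show ipD (phi H u) (phi H v) + ∑ j, u j * (0 : Fin m → F2) j = 0
  rw [ipD_phi_phi horth u v]
  simp

lemma nat_card_sigma {ι : Type*} [Fintype ι] (f : ι → Type*) [∀ i, Finite (f i)] :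
    Nat.card (Sigma f) = ∑ i, Nat.card (f i) := by
  classical
  letI : ∀ i, Fintype (f i) := fun i => Fintype.ofFinite _
  rw [Nat.card_eq_fintype_card, Fintype.card_sigma]
  exact Finset.sum_congr rfl fun i _ => Nat.card_eq_fintype_card.symm

/-- Fiberwise counting of subtypes. -/
lemma card_sum_fiber {α : Type*} [Finite α] (P : α → Prop) (f : α → ℕ) (t : Finset ℕ) :
    ∑ j ∈ t, Nat.card {a // P a ∧ f a = j} = Nat.card {a // P a ∧ f a ∈ t} := by
  classical
  have e : {a // P a ∧ f a ∈ t} ≃ Σ j : {j // j ∈ t}, {a // P a ∧ f a = j.1} :=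
    { toFun := fun a => ⟨⟨f a.1, a.2.2⟩, ⟨a.1, a.2.1, rfl⟩⟩
      invFun := fun x => ⟨x.2.1, x.2.2.1, by rw [x.2.2.2]; exact x.1.2⟩
      left_inv := fun a => rfl
      right_inv := fun x => by
        obtain ⟨⟨j, hj⟩, ⟨a, hP, hf⟩⟩ := x
        have hf' : f a = j := hf
        subst hf'
        rfl }
  rw [Nat.card_congr e, nat_card_sigma, Finset.univ_eq_attach]
  rw [← Finset.sum_attach t (fun j => Nat.card {a // P a ∧ f a = j})]

end Stmt5Aux
open Stmt5Aux

/-- basic relations between the split weight enumerators of a DS code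
of minimum distance `d`. -/
theorem stmt5 (n k d : ℕ) (hk : k ≤ n) (H : Fin (n - k) → Fin n → F4)
    (hind : LinearIndependent F2 H)
    (horth : ∀ r s, ipD (H r) (H s) = 0)
    (hmin : ∀ v ∈ dualDS (CDS H),
      (¬ ∃ g ∈ rowSpanF2 H, v = (g, 0)) → d ≤ wt v.1 + wt v.2) :
    (∀ i, 1 ≤ i → i ≤ d - 1 →
      Bwt (dualDS (CDS H)) i 0 = ∑ j ∈ Finset.range (n - k + 1), Bwt (CDS H) i j)
    ∧ (∀ i, d ≤ i → i ≤ n →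
      (∑ j ∈ Finset.Icc 1 (n - k), Bwt (CDS H) i j) ≤ Bwt (dualDS (CDS H)) i 0)
    ∧ Bwt (CDS H) 0 0 = 1
    ∧ Bwt (dualDS (CDS H)) 0 0 = 1
    ∧ (∀ i, 1 ≤ i → Bwt (CDS H) i 0 = 0) := by
  classical
  have hmemCDS : ∀ w : (Fin n → F4) × (Fin (n - k) → F2),
      w ∈ CDS H ↔ ∃ u, w = (phi H u, u) := fun w => Iff.rfl
  have hphi0 : phi H (0 : Fin (n - k) → F2) = 0 := by
    funext j; simp [phi]
  have hBwtsum : ∀ (i : ℕ) (t : Finset ℕ),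
      ∑ j ∈ t, Bwt (CDS H) i j
        = Nat.card {w : (Fin n → F4) × (Fin (n - k) → F2) //
            (w ∈ CDS H ∧ wt w.1 = i) ∧ wt w.2 ∈ t} := by
    intro i t
    rw [← card_sum_fiber (fun w => w ∈ CDS H ∧ wt w.1 = i) (fun w => wt w.2)]
    refine Finset.sum_congr rfl fun j _ => ?_
    unfold Bwt
    exact Nat.card_congr (Equiv.subtypeEquivRight fun w => by tauto)
  refine ⟨?_, ?_, ?_, ?_, ?_⟩
  · -- part 1
    intro i hi1 hid
    have hdrop : Nat.card {w : (Fin n → F4) × (Fin (n - k) → F2) //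
            (w ∈ CDS H ∧ wt w.1 = i) ∧ wt w.2 ∈ Finset.range (n - k + 1)}
        = Nat.card {u : Fin (n - k) → F2 // wt (phi H u) = i} := by
      refine Nat.card_eq_of_bijective
        (fun w => ⟨w.1.2, ?_⟩) ⟨?_, ?_⟩
      · obtain ⟨w, ⟨⟨u, rfl⟩, hw1⟩, _⟩ := w
        exact hw1
      · rintro ⟨w, ⟨⟨u, rfl⟩, hw1⟩, hw2⟩ ⟨w', ⟨⟨u', rfl⟩, hw1'⟩, hw2'⟩ h
        have : u = u' := congrArg Subtype.val h
        subst this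
        rfl
      · rintro ⟨u, hu⟩
        exact ⟨⟨(phi H u, u), ⟨⟨u, rfl⟩, hu⟩,
          by simpa using Nat.lt_succ_of_le (wt_le u)⟩, rfl⟩
    rw [hBwtsum i, hdrop]
    -- LHS
    unfold Bwt
    refine (Nat.card_eq_of_bijective
      (fun u => ⟨(phi H u.1, 0), phi_mem_dual horth u.1, u.2, wt_zero⟩) ⟨?_, ?_⟩).symm
    · intro u v huv
      have h1 : (phi H u.1, (0 : Fin (n - k) → F2)) = (phi H v.1, 0) :=
        Subtype.ext_iff.mp huv
      exact Subtype.ext (phi_injective hind (congrArg Prod.fst h1))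
    · rintro ⟨w, hdual, hw1, hw2⟩
      have hw20 : w.2 = 0 := (wt_eq_zero_iff _).mp hw2
      by_cases hrow : ∃ g ∈ rowSpanF2 H, w = (g, 0)
      · obtain ⟨g, ⟨u, rfl⟩, hwg⟩ := hrow
        refine ⟨⟨u, ?_⟩, ?_⟩
        · rw [hwg] at hw1
          exact hw1
        · apply Subtype.ext
          show (phi H u, (0 : Fin (n - k) → F2)) = w
          rw [hwg]
          rfl
      · exfalso
        have := hmin w hdual hrow
        rw [hw1, hw2] at this
        omega
  · -- part 2
    intro i _ _
    rw [hBwtsum i]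
    unfold Bwt
    refine Nat.card_le_card_of_injective
      (fun w => ⟨(w.1.1, 0), ?_, ?_, wt_zero⟩) ?_
    · obtain ⟨w, ⟨⟨u, rfl⟩, _⟩, _⟩ := w
      exact phi_mem_dual horth u
    · exact w.2.1.2
    · rintro ⟨w, ⟨⟨u, rfl⟩, hw⟩, hw2⟩ ⟨w', ⟨⟨u', rfl⟩, hw'⟩, hw2'⟩ h
      have h1 : ((phi H u, u).1, (0 : Fin (n - k) → F2)) = ((phi H u', u').1, 0) :=
        Subtype.ext_iff.mp h
      have : u = u' := phi_injective hind (congrArg Prod.fst h1)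
      subst this
      rfl
  · -- part 3
    rw [Bwt, Nat.card_eq_one_iff_unique]
    refine ⟨⟨?_⟩, ⟨⟨(0, 0), ⟨0, Prod.ext hphi0.symm rfl⟩, wt_zero, wt_zero⟩⟩⟩
    rintro ⟨w, _, hw1, hw2⟩ ⟨w', _, hw1', hw2'⟩
    have e1 := (wt_eq_zero_iff _).mp hw1
    have e2 := (wt_eq_zero_iff _).mp hw2
    have e1' := (wt_eq_zero_iff _).mp hw1'
    have e2' := (wt_eq_zero_iff _).mp hw2'
    exact Subtype.ext (Prod.ext (e1.trans e1'.symm) (e2.trans e2'.symm))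
  · -- part 4
    rw [Bwt, Nat.card_eq_one_iff_unique]
    refine ⟨⟨?_⟩, ⟨⟨(0, 0), fun w _ => by simp [ipDS, ipD], wt_zero, wt_zero⟩⟩⟩
    rintro ⟨w, _, hw1, hw2⟩ ⟨w', _, hw1', hw2'⟩
    have e1 := (wt_eq_zero_iff _).mp hw1
    have e2 := (wt_eq_zero_iff _).mp hw2
    have e1' := (wt_eq_zero_iff _).mp hw1'
    have e2' := (wt_eq_zero_iff _).mp hw2'
    exact Subtype.ext (Prod.ext (e1.trans e1'.symm) (e2.trans e2'.symm))
  · -- part 5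
    intro i hi
    rw [Bwt]
    have : IsEmpty {w : (Fin n → F4) × (Fin (n - k) → F2) //
        w ∈ CDS H ∧ wt w.1 = i ∧ wt w.2 = 0} := by
      constructor
      rintro ⟨w, ⟨u, rfl⟩, hw1, hw2⟩
      have hu : u = 0 := (wt_eq_zero_iff _).mp hw2
      subst hu
      have h1 : wt (phi H (0 : Fin (n - k) → F2)) = i := hw1
      rw [hphi0, wt_zero] at h1
      omega
    exact Nat.card_of_isEmpty
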